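/- Let G ∈ ℂ^{κ×κ} be invertible, T ≥ 1, n_t ≥ 1 with κ = n_t T, and for p = 1,...,n_t let G_{|p} denote the first pT columns of G. Then there exists a permutation matrix Π ∈ ℝ^{κ×κ} and, for each p = 1,...,n_t, a matrix U_p ∈ ℂ^{n_t×p} with U_p*U_p = I_p, such that rank((I_T ⊗ U_p*)[GΠ]_{|p}) = pT for all p, where the U_p are nested (U_{p−1} is obtained from U_p by removing a column). -/

import Mathlib

open Matrix Kronecker

lemma aux_nested {F : Type*} [Field F] {κ : ℕ} (A : Matrix (Fin κ) (Fin κ) F)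
    (hA : IsUnit A.det) :
    ∃ π : Equiv.Perm (Fin κ), ∀ k (hk : k ≤ κ),
      IsUnit ((A.submatrix (Fin.castLE hk) (fun j => π (Fin.castLE hk j))).det) := by
  classical
  have key : ∀ k (hk : k ≤ κ), ∃ f : Fin k → Fin κ, Function.Injective f ∧
      ∀ m (hm : m ≤ k),
        IsUnit ((A.submatrix (Fin.castLE (hm.trans hk))
          (fun j => f (Fin.castLE hm j))).det) := by
    intro k
    induction k with
    | zero =>
      intro _
      refine ⟨Fin.elim0, fun a => a.elim0, fun m hm => ?_⟩
      interval_cases m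
      simp [Matrix.det_fin_zero]
    | succ k ih =>
      intro hk'
      have hk : k ≤ κ := Nat.le_of_succ_le hk'
      obtain ⟨f, hfinj, hf⟩ := ih hk
      -- columns restricted to first k+1 rows
      set v : Fin κ → (Fin (k + 1) → F) :=
        fun j => fun i => A (Fin.castLE hk' i) j with hv
      -- the v's span everything
      have hspan : Submodule.span F (Set.range v) = ⊤ := by
        rw [eq_top_iff]
        rintro w -
        set w' : Fin κ → F := fun i => if h : (i : ℕ) < k + 1 then w ⟨i, h⟩ else 0 with hw'
        obtain ⟨x, hx⟩ : ∃ x, A.mulVec x = w' := by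
          have : Function.Surjective A.mulVec :=
            Matrix.mulVec_surjective_iff_isUnit.2 ((Matrix.isUnit_iff_isUnit_det A).2 hA)
          exact this w'
        have hwsum : w = ∑ j, x j • v j := by
          funext i
          have := congrFun hx (Fin.castLE hk' i)
          rw [Matrix.mulVec, dotProduct] at this
          have hw : w' (Fin.castLE hk' i) = w i := by
            simp [hw', Fin.castLE]
            intro h; exact absurd h (by have := i.isLt; omega)
          rw [hw] at this
          rw [← this]
          simp [hv, Finset.sum_apply, mul_comm]
        rw [hwsum]
        exact Submodule.sum_mem _ fun j _ =>
          Submodule.smul_mem _ _ (Submodule.subset_span ⟨j, rfl⟩)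
      -- independence of current columns
      have hli : LinearIndependent F (v ∘ f) := by
        have hdet := hf k le_rfl
        have hunit : IsUnit (A.submatrix (Fin.castLE hk)
            (fun j => f (Fin.castLE le_rfl j))) :=
          (Matrix.isUnit_iff_isUnit_det _).2 hdet
        have hcols := Matrix.linearIndependent_cols_iff_isUnit.2 hunit
        -- restrict rows: cols of the k×k matrix are the first-k-rows restrictions
        have : LinearIndependent F
            (fun j => (LinearMap.funLeft F F (Fin.castSucc : Fin k → Fin (k+1)))
              ((v ∘ f) j)) := by
          convert hcols with j
          funext i; rfl
        exact LinearIndependent.of_comp _ this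
      -- find a new column
      obtain ⟨c, hc⟩ : ∃ c, v c ∉ Submodule.span F (Set.range (v ∘ f)) := by
        by_contra h
        push_neg at h
        have hle : (⊤ : Submodule F (Fin (k+1) → F)) ≤
            Submodule.span F (Set.range (v ∘ f)) := by
          rw [← hspan]
          rw [Submodule.span_le]
          rintro _ ⟨j, rfl⟩
          exact h j
        have h1 : Module.finrank F (Fin (k+1) → F) ≤
            Module.finrank F (Submodule.span F (Set.range (v ∘ f))) := by
          simpa using Submodule.finrank_mono hle |>.trans_eq (by simp)
        have h2 : Module.finrank F (Submodule.span F (Set.range (v ∘ f))) ≤ k :=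
          (finrank_range_le_card (v ∘ f)).trans_eq (by simp)
        have h3 : Module.finrank F (Fin (k+1) → F) = k + 1 := by
          simp [Module.finrank_pi]
        omega
      have hcnot : ∀ j, c ≠ f j := by
        intro j hcj
        exact hc (hcj ▸ Submodule.subset_span ⟨j, rfl⟩)
      refine ⟨Fin.snoc f c, ?_, ?_⟩
      · intro a b hab
        induction a using Fin.lastCases with
        | last =>
          induction b using Fin.lastCases with
          | last => rfl
          | cast b =>
            rw [Fin.snoc_last, Fin.snoc_castSucc] at hab
            exact absurd hab (hcnot b)
        | cast a =>
          induction b using Fin.lastCases with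
          | last =>
            rw [Fin.snoc_last, Fin.snoc_castSucc] at hab
            exact absurd hab.symm (hcnot a)
          | cast b =>
            rw [Fin.snoc_castSucc, Fin.snoc_castSucc] at hab
            exact congrArg Fin.castSucc (hfinj hab)
      · intro m hm
        rcases Nat.lt_or_ge m (k + 1) with hmk | hmk
        · have hm' : m ≤ k := Nat.lt_succ_iff.mp hmk
          have heq : (A.submatrix (Fin.castLE (hm.trans hk'))
              (fun j => (Fin.snoc f c : Fin (k+1) → Fin κ) (Fin.castLE hm j))) =
              (A.submatrix (Fin.castLE (hm'.trans hk))
              (fun j => f (Fin.castLE hm' j))) := by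
            ext i j
            simp only [Matrix.submatrix_apply]
            congr 1
            · rw [show (Fin.castLE hm j : Fin (k+1)) =
                Fin.castSucc (Fin.castLE hm' j) from rfl, Fin.snoc_castSucc]
          rw [heq]
          exact hf m hm'
        · have hm1 : m = k + 1 := le_antisymm hm hmk
          subst hm1
          -- full (k+1)×(k+1): columns are v ∘ snoc f c, independent
          have hli' : LinearIndependent F (v ∘ Fin.snoc f c) := by
            rw [Fin.comp_snoc]
            exact linearIndependent_fin_snoc.2 ⟨hli, hc⟩
          set M : Matrix (Fin (k+1)) (Fin (k+1)) F :=
            A.submatrix (Fin.castLE hk') (fun j => (Fin.snoc f c : Fin (k+1) → Fin κ) (Fin.castLE le_rfl j))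
            with hM
          rw [isUnit_iff_ne_zero]
          intro hdet0
          obtain ⟨x, hx0, hx⟩ := (Matrix.exists_mulVec_eq_zero_iff).2 hdet0
          have := Fintype.linearIndependent_iff.1 hli' x ?_
          · exact hx0 (funext this)
          · funext i
            have := congrFun hx i
            rw [Matrix.mulVec, dotProduct] at this
            rw [← this]
            simp only [Finset.sum_apply, Pi.smul_apply, smul_eq_mul, hM,
              Matrix.submatrix_apply, Function.comp_apply, hv, Pi.zero_apply]
            refine Finset.sum_congr rfl fun j _ => ?_
            rw [mul_comm]
            congr 2
  obtain ⟨f, hfinj, hf⟩ := key κ le_rfl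
  have hbij : Function.Bijective f := Finite.injective_iff_bijective.mp hfinj
  refine ⟨Equiv.ofBijective f hbij, fun k hk => ?_⟩
  have := hf k hk
  convert this using 2
  rfl

lemma rank_submatrix_equiv_rows {F : Type*} [Field F] {l m n : Type*}
    [Fintype m] [Fintype n] [Fintype l] (A : Matrix m n F) (e : l ≃ m) :
    (A.submatrix ⇑e (id : n → n)).rank = A.rank := by
  rw [show (A.submatrix ⇑e (id : n → n)) = A.submatrix ⇑e ⇑(Equiv.refl n) from rfl]
  rw [Matrix.rank, Matrix.rank, Matrix.mulVecLin_submatrix, LinearMap.range_comp,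
    LinearMap.range_comp,
    show LinearMap.funLeft F F ⇑(Equiv.refl n).symm = LinearMap.id from rfl,
    LinearMap.range_id, Submodule.map_top,
    show LinearMap.funLeft F F ⇑e =
      (LinearEquiv.funCongrLeft F F e : (m → F) →ₗ[F] (l → F)) from rfl]
  exact LinearEquiv.finrank_map_eq _ _

theorem stmt19 (nt T : ℕ) (hnt : 1 ≤ nt) (hT : 1 ≤ T)
    (G : Matrix (Fin (nt * T)) (Fin (nt * T)) ℂ) (hG : IsUnit G.det) :
    ∃ (π : Equiv.Perm (Fin (nt * T))) (U : (p : ℕ) → Matrix (Fin nt) (Fin p) ℂ),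
      (∀ p, 1 ≤ p → p ≤ nt → (U p)ᴴ * U p = 1) ∧
      (∀ p, p + 1 ≤ nt → ∃ e : Fin p → Fin (p + 1),
        StrictMono e ∧ U p = (U (p + 1)).submatrix id e) ∧
      (∀ p, 1 ≤ p → ∀ hp : p ≤ nt,
        Matrix.rank
          (((1 : Matrix (Fin T) (Fin T) ℂ) ⊗ₖ (U p)ᴴ) *
            (Matrix.of fun (q : Fin T × Fin nt) (j : Fin (T * p)) =>
              G (Fin.cast (Nat.mul_comm T nt) (finProdFinEquiv q))
                (π (Fin.castLE (by rw [Nat.mul_comm nt T]; exact Nat.mul_le_mul le_rfl hp) j))))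
          = p * T) := by
  classical
  -- the row-reordering permutation
  set ρ : Equiv.Perm (Fin (nt * T)) :=
    (finProdFinEquiv.symm.trans ((Equiv.prodComm (Fin nt) (Fin T)).trans
      (finProdFinEquiv.trans (finCongr (Nat.mul_comm T nt))))) with hρdef
  have hA : IsUnit ((G.submatrix ρ id).det) := by
    rw [Matrix.det_permute]
    rcases Int.units_eq_one_or (Equiv.Perm.sign ρ) with h | h
    · rw [h]; simpa using hG
    · rw [h]; simpa using hG.neg
  obtain ⟨π, hπ⟩ := aux_nested (G.submatrix ρ id) hA
  refine ⟨π, fun p => Matrix.of fun i j => if (i : ℕ) = (j : ℕ) then (1 : ℂ) else 0,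
    ?_, ?_, ?_⟩
  · -- orthonormal columns
    intro p hp1 hp
    ext a b
    rw [Matrix.mul_apply, Finset.sum_eq_single (Fin.castLE hp a)]
    · simp only [Matrix.conjTranspose_apply, Matrix.of_apply, Fin.coe_castLE,
        Matrix.one_apply]
      simp [Fin.ext_iff, eq_comm]
    · intro i _ hi
      have : (i : ℕ) ≠ (a : ℕ) := fun h => hi (Fin.ext h)
      simp [Matrix.conjTranspose_apply, this]
    · simp
  · -- nesting
    intro p hp
    refine ⟨Fin.castSucc, Fin.strictMono_castSucc, ?_⟩
    ext i j
    simp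
  · -- the rank condition
    intro p hp1 hp
    have hk : T * p ≤ nt * T := by
      rw [Nat.mul_comm nt T]; exact Nat.mul_le_mul le_rfl hp
    set S := (G.submatrix ρ id).submatrix (Fin.castLE hk)
      (fun j => π (Fin.castLE hk j)) with hSdef
    have hSu : IsUnit S.det := hπ (T * p) hk
    set e : (Fin T × Fin p) ≃ Fin (T * p) :=
      (Equiv.prodComm (Fin T) (Fin p)).trans
        (finProdFinEquiv.trans (finCongr (Nat.mul_comm p T))) with hedef
    have hrow : ∀ (t : Fin T) (r : Fin p),
        ρ (Fin.castLE hk (e (t, r))) =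
          Fin.cast (Nat.mul_comm T nt) (finProdFinEquiv (t, Fin.castLE hp r)) := by
      intro t r
      have h1 : Fin.castLE hk (e (t, r)) = finProdFinEquiv (Fin.castLE hp r, t) := by
        apply Fin.ext
        simp [hedef, finProdFinEquiv]
      rw [h1, hρdef]
      simp
    have hmat :
        (((1 : Matrix (Fin T) (Fin T) ℂ) ⊗ₖ
            (Matrix.of fun (i : Fin nt) (j : Fin p) =>
              if (i : ℕ) = (j : ℕ) then (1 : ℂ) else 0)ᴴ) *
          (Matrix.of fun (q : Fin T × Fin nt) (j : Fin (T * p)) =>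
            G (Fin.cast (Nat.mul_comm T nt) (finProdFinEquiv q))
              (π (Fin.castLE hk j)))) =
        S.submatrix e id := by
      ext x j
      obtain ⟨t, r⟩ := x
      rw [Matrix.mul_apply, Finset.sum_eq_single ((t, Fin.castLE hp r) : Fin T × Fin nt)]
      · simp only [Matrix.kroneckerMap_apply, Matrix.one_apply_eq,
          Matrix.conjTranspose_apply, Matrix.of_apply, Fin.coe_castLE, if_pos,
          star_one, one_mul, Matrix.submatrix_apply, hSdef, id_eq]
        rw [hrow t r]
      · rintro ⟨s, c⟩ - hne
        rcases eq_or_ne t s with rfl | hts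
        · have hc : (c : ℕ) ≠ (r : ℕ) := by
            intro h
            exact hne (by simp [Prod.ext_iff, Fin.ext_iff, h])
          simp [Matrix.kroneckerMap_apply, Matrix.conjTranspose_apply, hc]
        · simp [Matrix.kroneckerMap_apply, Matrix.one_apply, hts]
      · simp
    rw [hmat]
    have hrk : (S.submatrix ⇑e id).rank = S.rank :=
      rank_submatrix_equiv_rows S e
    rw [hrk, Matrix.rank_of_isUnit S ((Matrix.isUnit_iff_isUnit_det S).2 hSu)]
    simp [Nat.mul_comm]
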